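/- Let H be an N×m real matrix with full row rank satisfying the unique representation property (spark(H) = N+1). If A ⊆ {1,…,m} is an index set with 0 < |A| ≤ m - N, then the largest eigenvalue of H_A^T (HH^T)^{-1} H_A is strictly less than 1. -/

import Mathlib

open Matrix

lemma aux_orth_zero {N m : ℕ} (H : Matrix (Fin N) (Fin m) ℝ) (S : Finset (Fin m))
    (hcard : S.card = N)
    (hli : LinearIndependent ℝ (fun j : S => fun i => H i (j : Fin m)))
    (z : Fin N → ℝ) (hz : ∀ j ∈ S, (fun i => H i j) ⬝ᵥ z = 0) : z = 0 := by
  rcases Nat.eq_zero_or_pos N with hN | hN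
  · subst hN; ext i; exact absurd i.2 (Nat.not_lt_zero _)
  have hne : Nonempty S := by
    rw [Finset.nonempty_coe_sort]
    exact Finset.card_pos.mp (hcard ▸ hN)
  have hcard' : Fintype.card S = Module.finrank ℝ (Fin N → ℝ) := by
    simp [hcard]
  have hspan : Submodule.span ℝ (Set.range (fun j : S => fun i => H i (j : Fin m))) = ⊤ := by
    rw [← coe_basisOfLinearIndependentOfCardEqFinrank hli hcard']
    exact (basisOfLinearIndependentOfCardEqFinrank hli hcard').span_eq
  have hzmem : z ∈ Submodule.span ℝ (Set.range (fun j : S => fun i => H i (j : Fin m))) := by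
    rw [hspan]; trivial
  have hzz : z ⬝ᵥ z = 0 := by
    refine Submodule.span_induction (p := fun w _ => w ⬝ᵥ z = 0) ?_ ?_ ?_ ?_ hzmem
    · rintro w ⟨j, rfl⟩; exact hz j j.2
    · simp
    · intro a b _ _ ha hb; simp [add_dotProduct, ha, hb]
    · intro c a _ ha; simp [smul_dotProduct, ha]
  exact dotProduct_self_eq_zero.mp hzz

lemma dot_self_pos {n : Type*} [Fintype n] {v : n → ℝ} (hv : v ≠ 0) : 0 < v ⬝ᵥ v :=
  lt_of_le_of_ne (Finset.sum_nonneg fun i _ => mul_self_nonneg _)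
    (Ne.symm fun h0 => hv (dotProduct_self_eq_zero.mp h0))

theorem max_eigenvalue_lt_one_of_URP {N m : ℕ} (H : Matrix (Fin N) (Fin m) ℝ)
    (hNm : N ≤ m) (hrank : H.rank = N)
    (hURP : ∀ A : Finset (Fin m), A.card = N →
      LinearIndependent ℝ (fun j : A => fun i => H i (j : Fin m)))
    (A : Finset (Fin m)) (hA0 : 0 < A.card) (hAmN : A.card ≤ m - N)
    (h : ((H.submatrix id (fun j : A => (j : Fin m)))ᵀ * (H * Hᵀ)⁻¹ *
          H.submatrix id (fun j : A => (j : Fin m))).IsHermitian) :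
    ∀ i : A, h.eigenvalues i < 1 := by
  classical
  set B := H.submatrix id (fun j : A => (j : Fin m)) with hBdef
  set G := H * Hᵀ with hGdef
  -- `Hᵀ` has trivial kernel
  have hHt : ∀ z : Fin N → ℝ, Hᵀ *ᵥ z = 0 → z = 0 := by
    intro z hz
    obtain ⟨S, -, hScard⟩ :=
      Finset.exists_subset_card_eq (s := (Finset.univ : Finset (Fin m))) (n := N)
        (by simpa using hNm)
    refine aux_orth_zero H S hScard (hURP S hScard) z ?_
    intro j _
    have := congrFun hz j
    simpa [mulVec, dotProduct] using this
  -- G is positive definite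
  have hGpd : G.PosDef := by
    rw [posDef_iff_dotProduct_mulVec]
    constructor
    · unfold Matrix.IsHermitian
      rw [hGdef, conjTranspose_eq_transpose_of_trivial, transpose_mul, transpose_transpose]
    · intro x hx
      have hx' : Hᵀ *ᵥ x ≠ 0 := fun h0 => hx (hHt x h0)
      have : star x ⬝ᵥ (G *ᵥ x) = (Hᵀ *ᵥ x) ⬝ᵥ (Hᵀ *ᵥ x) := by
        rw [hGdef, ← mulVec_mulVec, star_trivial, dotProduct_mulVec, ← mulVec_transpose]
      rw [this]
      exact dot_self_pos hx'
  have hGdet : IsUnit G.det := hGpd.det_pos.ne'.isUnit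
  have hGGi : G * G⁻¹ = 1 := mul_nonsing_inv _ hGdet
  -- key inequality
  have key : ∀ x : A → ℝ, x ≠ 0 →
      x ⬝ᵥ ((Bᵀ * G⁻¹ * B) *ᵥ x) < x ⬝ᵥ x := by
    intro x hx
    set y : Fin m → ℝ := fun j => if hj : j ∈ A then x ⟨j, hj⟩ else 0 with hydef
    have hyA : ∀ j : A, y (j : Fin m) = x j := by
      intro j; simp [hydef, j.2]
    have hyO : ∀ j : Fin m, j ∉ A → y j = 0 := by
      intro j hj; simp [hydef, hj]
    -- transfer sums
    have hsum : ∀ f : Fin m → ℝ, (∀ j : Fin m, j ∉ A → f j = 0) →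
        (∑ j : A, f (j : Fin m)) = ∑ j : Fin m, f j := by
      intro f hf
      rw [Finset.univ_eq_attach, Finset.sum_attach A f]
      exact Finset.sum_subset (Finset.subset_univ A) (fun j _ hj => hf j hj)
    have hBx : B *ᵥ x = H *ᵥ y := by
      funext i
      have := hsum (fun j => H i j * y j) (fun j hj => by simp [hyO j hj])
      simpa [mulVec, dotProduct, hBdef, submatrix, hyA] using this
    have hxy : x ⬝ᵥ x = y ⬝ᵥ y := by
      have := hsum (fun j => y j * y j) (fun j hj => by simp [hyO j hj])
      simpa [dotProduct, hyA] using this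
    have hy0 : y ≠ 0 := by
      intro h0
      apply hx
      funext j
      have := congrFun h0 (j : Fin m)
      rwa [hyA j] at this
    set u : Fin N → ℝ := H *ᵥ y with hudef
    set w : Fin N → ℝ := G⁻¹ *ᵥ u with hwdef
    set p : Fin m → ℝ := Hᵀ *ᵥ w with hpdef
    have hyp : y ⬝ᵥ p = u ⬝ᵥ w := by
      rw [hpdef, dotProduct_mulVec, ← mulVec_transpose, transpose_transpose, hudef]
    have hpp : p ⬝ᵥ p = u ⬝ᵥ w := by
      rw [hpdef, dotProduct_mulVec, ← mulVec_transpose, transpose_transpose,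
        mulVec_mulVec, ← hGdef, hwdef, mulVec_mulVec, hGGi, one_mulVec]
    have hpy : p ⬝ᵥ y = u ⬝ᵥ w := by rw [dotProduct_comm]; exact hyp
    have hrne : y - p ≠ 0 := by
      intro h0
      have hyeq : y = p := sub_eq_zero.mp h0
      obtain ⟨S, hSsub, hScard⟩ :=
        Finset.exists_subset_card_eq (s := Aᶜ) (n := N) (by
          rw [Finset.card_compl]
          have := A.card_le_univ
          simp only [Fintype.card_fin] at *
          omega)
      have hw0 : w = 0 := by
        refine aux_orth_zero H S hScard (hURP S hScard) w ?_
        intro j hjS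
        have hjA : j ∉ A := Finset.mem_compl.mp (hSsub hjS)
        have h2 : p j = 0 := by rw [← hyeq]; exact hyO j hjA
        rw [hpdef] at h2
        simpa [mulVec, dotProduct] using h2
      apply hy0
      rw [hyeq, hpdef, hw0, mulVec_zero]
    have hrr : 0 < (y - p) ⬝ᵥ (y - p) := dot_self_pos hrne
    have hexp : (y - p) ⬝ᵥ (y - p) = y ⬝ᵥ y - u ⬝ᵥ w := by
      rw [dotProduct_sub, sub_dotProduct, sub_dotProduct, hyp, hpy, hpp]
      ring
    have hT : x ⬝ᵥ ((Bᵀ * G⁻¹ * B) *ᵥ x) = u ⬝ᵥ w := by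
      rw [← mulVec_mulVec, ← mulVec_mulVec, hBx, dotProduct_mulVec,
        vecMul_transpose, hBx, ← hwdef]
    rw [hT, hxy]
    have := hexp ▸ hrr
    linarith
  -- eigenvalue part
  intro i
  have hv := h.mulVec_eigenvectorBasis i
  set v : A → ℝ := ⇑(h.eigenvectorBasis i) with hvdef
  have hvne : v ≠ 0 := by
    intro h0
    exact h.eigenvectorBasis.orthonormal.ne_zero i (by ext j; exact congrFun h0 j)
  have h1 := key v hvne
  rw [hv] at h1
  have h2 : v ⬝ᵥ (h.eigenvalues i • v) = h.eigenvalues i * (v ⬝ᵥ v) := by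
    simp [dotProduct_smul, smul_eq_mul]
  rw [h2] at h1
  have hvv : 0 < v ⬝ᵥ v := dot_self_pos hvne
  exact (mul_lt_iff_lt_one_left hvv).mp h1
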